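/- Let K be even and D an integer with K/2 < D < K such that m = D − K/2 divides K/2; set n = (K/2)/m. Consider the index coding problem over GF(2) where receiver R_k demands x_k and has side information {x_{k+K/2}, x_{k+D−K/2}, x_{k+D}} (indices mod K in {1,...,K}). Then the code with the m(n−1) = K − D symbols C_{i,j} = x_{i+jm} + x_{K/2+i+jm} + x_{i+(j+1)m} + x_{K/2+i+(j+1)m}, for i = 1,...,m and j = 0,...,n−2, allows every receiver R_k to decode x_k. In particular, for k = i + (n−1)m (i.e., K−D < k ≤ K/2), the sum of the n−1 symbols C_{i,0} + C_{i,1} + ... + C_{i,n−2} equals x_i + x_{K/2+i} + x_{i+(n−1)m} + x_{K/2+i+(n−1)m}, from which R_k decodes x_k. -/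

import Mathlib

def e (K : ℕ) (k : ZMod K) : ZMod K → ZMod 2 := Pi.single k 1

def Decodes (K : ℕ) (C : Set (ZMod K → ZMod 2)) (side : Set (ZMod K)) (k : ZMod K) : Prop :=
  e K k ∈ Submodule.span (ZMod 2) (C ∪ e K '' side)

def Fits {V : Type*} (E : V → V → Prop) (A : Matrix V V (ZMod 2)) : Prop :=
  (∀ i, A i i = 1) ∧ ∀ i j, i ≠ j → ¬ E i j → A i j = 0

private lemma castK (K a : ℕ) : ((a + K : ℕ) : ZMod K) = (a : ZMod K) := by
  push_cast [ZMod.natCast_self]; ring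

private lemma tele {M : Type*} [AddCommGroup M] (f : ℕ → M)
    (h : ∀ x : M, x + x = 0) (t : ℕ) :
    ∑ j ∈ Finset.range t, (f j + f (j + 1)) = f 0 + f t := by
  induction t with
  | zero => simpa using (h (f 0)).symm
  | succ t ih =>
      rw [Finset.sum_range_succ, ih, add_assoc, ← add_assoc (f t), h, zero_add]

private lemma decomp (m n t : ℕ) (h1 : 1 ≤ t) (h2 : t ≤ (n - 1) * m) :
    ∃ i j, 1 ≤ i ∧ i ≤ m ∧ j ≤ n - 2 ∧ i + j * m = t := by
  have hm : 1 ≤ m := by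
    rcases Nat.eq_zero_or_pos m with h | h
    · subst h; simp at h2; omega
    · exact h
  obtain ⟨q, r, hqr, hr⟩ : ∃ q r, r + q * m = t - 1 ∧ r < m :=
    ⟨(t - 1) / m, (t - 1) % m, Nat.mod_add_div' _ _, Nat.mod_lt _ hm⟩
  have hn2 : 2 ≤ n := by
    rcases Nat.lt_or_ge n 2 with h | h
    · interval_cases n <;> simp at h2 <;> omega
    · exact h
  refine ⟨r + 1, q, by omega, by omega, ?_, by omega⟩
  by_contra hj
  have hq : n - 1 ≤ q := by omega
  have := Nat.mul_le_mul_right m hq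
  omega

theorem stmt3 (K D m n : ℕ) (hK2 : 2 ∣ K) (h1 : K / 2 < D) (h2 : D < K)
    (hm : m = D - K / 2) (hdvd : m ∣ K / 2) (hn : n = (K / 2) / m) :
    (∀ k : ℕ, 1 ≤ k → k ≤ K →
      Decodes K
        {v | ∃ i j : ℕ, 1 ≤ i ∧ i ≤ m ∧ j ≤ n - 2 ∧
          v = e K ((i + j * m : ℕ) : ZMod K) + e K ((K / 2 + i + j * m : ℕ) : ZMod K)
            + e K ((i + (j + 1) * m : ℕ) : ZMod K) + e K ((K / 2 + i + (j + 1) * m : ℕ) : ZMod K)}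
        {((k + K / 2 : ℕ) : ZMod K), ((k + (D - K / 2) : ℕ) : ZMod K), ((k + D : ℕ) : ZMod K)}
        ((k : ℕ) : ZMod K)) ∧
    (∀ i : ℕ, 1 ≤ i → i ≤ m →
      (∑ j ∈ Finset.range (n - 1),
        (e K ((i + j * m : ℕ) : ZMod K) + e K ((K / 2 + i + j * m : ℕ) : ZMod K)
          + e K ((i + (j + 1) * m : ℕ) : ZMod K) + e K ((K / 2 + i + (j + 1) * m : ℕ) : ZMod K)))
      = e K ((i : ℕ) : ZMod K) + e K ((K / 2 + i : ℕ) : ZMod K)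
        + e K ((i + (n - 1) * m : ℕ) : ZMod K) + e K ((K / 2 + i + (n - 1) * m : ℕ) : ZMod K)) := by
  have hadd : ∀ x : ZMod K → ZMod 2, x + x = 0 := fun x =>
    funext fun _ => CharTwo.add_self_eq_zero _
  have hK : K / 2 * 2 = K := Nat.div_mul_cancel hK2
  have hm1 : 1 ≤ m := by omega
  have hmn : m * n = K / 2 := by rw [hn]; exact Nat.mul_div_cancel' hdvd
  have hn2 : 2 ≤ n := by
    rcases Nat.lt_or_ge n 2 with h | h
    · interval_cases n <;> omega
    · exact h
  have hn1m : (n - 1) * m = K / 2 - m := by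
    have : (n - 1) * m = n * m - 1 * m := by rw [Nat.sub_mul]
    rw [this, mul_comm n m]; omega
  -- Part 2 (telescoping)
  have part2 : ∀ i : ℕ, 1 ≤ i → i ≤ m →
      (∑ j ∈ Finset.range (n - 1),
        (e K ((i + j * m : ℕ) : ZMod K) + e K ((K / 2 + i + j * m : ℕ) : ZMod K)
          + e K ((i + (j + 1) * m : ℕ) : ZMod K) + e K ((K / 2 + i + (j + 1) * m : ℕ) : ZMod K)))
      = e K ((i : ℕ) : ZMod K) + e K ((K / 2 + i : ℕ) : ZMod K)
        + e K ((i + (n - 1) * m : ℕ) : ZMod K) + e K ((K / 2 + i + (n - 1) * m : ℕ) : ZMod K) := by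
    intro i _ _
    set f : ℕ → (ZMod K → ZMod 2) := fun j =>
      e K ((i + j * m : ℕ) : ZMod K) + e K ((K / 2 + i + j * m : ℕ) : ZMod K) with hf
    have hterm : ∀ j, e K ((i + j * m : ℕ) : ZMod K) + e K ((K / 2 + i + j * m : ℕ) : ZMod K)
        + e K ((i + (j + 1) * m : ℕ) : ZMod K) + e K ((K / 2 + i + (j + 1) * m : ℕ) : ZMod K)
        = f j + f (j + 1) := fun j => by rw [hf]; simp only [add_assoc]
    calc (∑ j ∈ Finset.range (n - 1),
        (e K ((i + j * m : ℕ) : ZMod K) + e K ((K / 2 + i + j * m : ℕ) : ZMod K)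
          + e K ((i + (j + 1) * m : ℕ) : ZMod K) + e K ((K / 2 + i + (j + 1) * m : ℕ) : ZMod K)))
        = ∑ j ∈ Finset.range (n - 1), (f j + f (j + 1)) :=
          Finset.sum_congr rfl fun j _ => hterm j
      _ = f 0 + f (n - 1) := tele f hadd (n - 1)
      _ = _ := by rw [hf]; simp; abel
  refine ⟨?_, part2⟩
  intro k hk1 hkK
  unfold Decodes
  set S := Submodule.span (ZMod 2)
    ({v | ∃ i j : ℕ, 1 ≤ i ∧ i ≤ m ∧ j ≤ n - 2 ∧
      v = e K ((i + j * m : ℕ) : ZMod K) + e K ((K / 2 + i + j * m : ℕ) : ZMod K)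
        + e K ((i + (j + 1) * m : ℕ) : ZMod K) + e K ((K / 2 + i + (j + 1) * m : ℕ) : ZMod K)}
      ∪ e K '' {((k + K / 2 : ℕ) : ZMod K), ((k + (D - K / 2) : ℕ) : ZMod K),
        ((k + D : ℕ) : ZMod K)}) with hS
  have hs1 : e K ((k + K / 2 : ℕ) : ZMod K) ∈ S :=
    Submodule.subset_span (Or.inr ⟨_, by simp, rfl⟩)
  have hs2 : e K ((k + (D - K / 2) : ℕ) : ZMod K) ∈ S :=
    Submodule.subset_span (Or.inr ⟨_, by simp, rfl⟩)
  have hs3 : e K ((k + D : ℕ) : ZMod K) ∈ S :=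
    Submodule.subset_span (Or.inr ⟨_, by simp, rfl⟩)
  rcases le_or_gt k (K / 2) with hkhalf | hkhalf
  · rcases le_or_gt k (K / 2 - m) with hcase | hcase
    · -- Case A : 1 ≤ k ≤ K/2 - m
      obtain ⟨i, j, hi1, hi2, hj, hij⟩ := decomp m n k hk1 (by omega)
      have hvC : e K ((k : ℕ) : ZMod K) + e K ((k + K / 2 : ℕ) : ZMod K)
          + e K ((k + (D - K / 2) : ℕ) : ZMod K) + e K ((k + D : ℕ) : ZMod K) ∈ S := by
        refine Submodule.subset_span (Or.inl ⟨i, j, hi1, hi2, hj, ?_⟩)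
        rw [show i + j * m = k from hij,
          show K / 2 + i + j * m = k + K / 2 by omega,
          show i + (j + 1) * m = k + (D - K / 2) by rw [add_mul]; omega,
          show K / 2 + i + (j + 1) * m = k + D by rw [add_mul]; omega]
      have h0 : e K ((k : ℕ) : ZMod K)
          = (e K ((k : ℕ) : ZMod K) + e K ((k + K / 2 : ℕ) : ZMod K)
            + e K ((k + (D - K / 2) : ℕ) : ZMod K) + e K ((k + D : ℕ) : ZMod K))
            - e K ((k + K / 2 : ℕ) : ZMod K) - e K ((k + (D - K / 2) : ℕ) : ZMod K)
            - e K ((k + D : ℕ) : ZMod K) := by abel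
      rw [h0]
      exact sub_mem (sub_mem (sub_mem hvC hs1) hs2) hs3
    · -- Case B : K/2 - m < k ≤ K/2
      set i := k - (n - 1) * m with hi
      have hik : i + (n - 1) * m = k := by omega
      have hi1 : 1 ≤ i := by omega
      have hi2 : i ≤ m := by omega
      have hsum : (∑ j ∈ Finset.range (n - 1),
          (e K ((i + j * m : ℕ) : ZMod K) + e K ((K / 2 + i + j * m : ℕ) : ZMod K)
            + e K ((i + (j + 1) * m : ℕ) : ZMod K)
            + e K ((K / 2 + i + (j + 1) * m : ℕ) : ZMod K))) ∈ S := by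
        refine Submodule.sum_mem _ fun j hj => Submodule.subset_span
          (Or.inl ⟨i, j, hi1, hi2, ?_, rfl⟩)
        have := Finset.mem_range.mp hj; omega
      rw [part2 i hi1 hi2] at hsum
      -- identify side-info vectors
      have e1 : e K ((k + K / 2 : ℕ) : ZMod K) = e K ((K / 2 + i + (n - 1) * m : ℕ) : ZMod K) := by
        rw [show k + K / 2 = K / 2 + i + (n - 1) * m by omega]
      have e2 : e K ((k + (D - K / 2) : ℕ) : ZMod K) = e K ((K / 2 + i : ℕ) : ZMod K) := by
        rw [show k + (D - K / 2) = K / 2 + i by omega]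
      have e3 : e K ((k + D : ℕ) : ZMod K) = e K ((i : ℕ) : ZMod K) := by
        rw [show k + D = i + K by omega, castK]
      rw [e1] at hs1; rw [e2] at hs2; rw [e3] at hs3
      have h0 : e K ((k : ℕ) : ZMod K)
          = (e K ((i : ℕ) : ZMod K) + e K ((K / 2 + i : ℕ) : ZMod K)
            + e K ((i + (n - 1) * m : ℕ) : ZMod K)
            + e K ((K / 2 + i + (n - 1) * m : ℕ) : ZMod K))
            - e K ((K / 2 + i + (n - 1) * m : ℕ) : ZMod K)
            - e K ((K / 2 + i : ℕ) : ZMod K) - e K ((i : ℕ) : ZMod K) := by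
        rw [show i + (n - 1) * m = k from hik]; abel
      rw [h0]
      exact sub_mem (sub_mem (sub_mem hsum hs1) hs2) hs3
  · set t := k - K / 2 with ht
    have htk : K / 2 + t = k := by omega
    rcases le_or_gt k (K - m) with hcase | hcase
    · -- Case C : K/2 < k ≤ K - m
      obtain ⟨i, j, hi1, hi2, hj, hij⟩ := decomp m n t (by omega) (by omega)
      have hvC : e K ((t : ℕ) : ZMod K) + e K ((k : ℕ) : ZMod K)
          + e K ((t + m : ℕ) : ZMod K) + e K ((k + m : ℕ) : ZMod K) ∈ S := by
        refine Submodule.subset_span (Or.inl ⟨i, j, hi1, hi2, hj, ?_⟩)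
        rw [show i + j * m = t from hij,
          show K / 2 + i + j * m = k by omega,
          show i + (j + 1) * m = t + m by rw [add_mul]; omega,
          show K / 2 + i + (j + 1) * m = k + m by rw [add_mul]; omega]
      have e1 : e K ((k + K / 2 : ℕ) : ZMod K) = e K ((t : ℕ) : ZMod K) := by
        rw [show k + K / 2 = t + K by omega, castK]
      have e2 : e K ((k + (D - K / 2) : ℕ) : ZMod K) = e K ((k + m : ℕ) : ZMod K) := by
        rw [show k + (D - K / 2) = k + m by omega]
      have e3 : e K ((k + D : ℕ) : ZMod K) = e K ((t + m : ℕ) : ZMod K) := by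
        rw [show k + D = t + m + K by omega, castK]
      rw [e1] at hs1; rw [e2] at hs2; rw [e3] at hs3
      have h0 : e K ((k : ℕ) : ZMod K)
          = (e K ((t : ℕ) : ZMod K) + e K ((k : ℕ) : ZMod K)
            + e K ((t + m : ℕ) : ZMod K) + e K ((k + m : ℕ) : ZMod K))
            - e K ((t : ℕ) : ZMod K) - e K ((k + m : ℕ) : ZMod K)
            - e K ((t + m : ℕ) : ZMod K) := by abel
      rw [h0]
      exact sub_mem (sub_mem (sub_mem hvC hs1) hs2) hs3
    · -- Case D : K - m < k ≤ K
      set i := t - (n - 1) * m with hi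
      have hik : i + (n - 1) * m = t := by omega
      have hi1 : 1 ≤ i := by omega
      have hi2 : i ≤ m := by omega
      have hsum : (∑ j ∈ Finset.range (n - 1),
          (e K ((i + j * m : ℕ) : ZMod K) + e K ((K / 2 + i + j * m : ℕ) : ZMod K)
            + e K ((i + (j + 1) * m : ℕ) : ZMod K)
            + e K ((K / 2 + i + (j + 1) * m : ℕ) : ZMod K))) ∈ S := by
        refine Submodule.sum_mem _ fun j hj => Submodule.subset_span
          (Or.inl ⟨i, j, hi1, hi2, ?_, rfl⟩)
        have := Finset.mem_range.mp hj; omega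
      rw [part2 i hi1 hi2] at hsum
      have e1 : e K ((k + K / 2 : ℕ) : ZMod K) = e K ((i + (n - 1) * m : ℕ) : ZMod K) := by
        rw [show k + K / 2 = i + (n - 1) * m + K by omega, castK]
      have e2 : e K ((k + (D - K / 2) : ℕ) : ZMod K) = e K ((i : ℕ) : ZMod K) := by
        rw [show k + (D - K / 2) = i + K by omega, castK]
      have e3 : e K ((k + D : ℕ) : ZMod K) = e K ((K / 2 + i : ℕ) : ZMod K) := by
        rw [show k + D = K / 2 + i + K by omega, castK]
      rw [e1] at hs1; rw [e2] at hs2; rw [e3] at hs3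
      have h0 : e K ((k : ℕ) : ZMod K)
          = (e K ((i : ℕ) : ZMod K) + e K ((K / 2 + i : ℕ) : ZMod K)
            + e K ((i + (n - 1) * m : ℕ) : ZMod K)
            + e K ((K / 2 + i + (n - 1) * m : ℕ) : ZMod K))
            - e K ((i + (n - 1) * m : ℕ) : ZMod K)
            - e K ((i : ℕ) : ZMod K) - e K ((K / 2 + i : ℕ) : ZMod K) := by
        rw [show K / 2 + i + (n - 1) * m = k by omega]; abel
      rw [h0]
      exact sub_mem (sub_mem (sub_mem hsum hs1) hs2) hs3
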